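/- Let L, μ, c, α, ε, σ, C, R be positive real numbers, η := μL/(μ+L), and assume αε ≤ 2/(μ+L) and cε ≤ 2. Let (A_k)_{k≥0} and (B_k)_{k≥0} be nonnegative real sequences satisfying, for all k ≥ 0: A_k ≤ R, A_{k+1} ≤ (1 − 3ηαε/2)A_k + Lαε(1/4 + L/(2η))B_k + Nε²σ², and B_{k+1} ≤ (1 − cε/2)B_k + (3L²α²ε/c)(A_k + C²) + 4Nε²σ², where N is a positive integer. Then for all k ≥ 1: B_k ≤ (1 − cε/2)^k B_0 + (2/c)[(3L²α²/c)(R + C²) + 4Nεσ²], and A_k ≤ (1 − 3ηαε/2)^k A_0 + k·Lαε(1/4 + L/(2η))·(max{1 − 3ηαε/2, 1 − cε/2})^{k−1}·B_0 + (4L/(3ηc))(1/4 + L/(2η))[(3L²α²/c)(R + C²) + 4Nεσ²] + 2Nεσ²/(3ηα). -/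

import Mathlib

/-- Sequence-level form of Theorem 2 (thm-1) of the paper for quantization of type 1. -/
theorem stmt11 (L μ c α ε σ C R : ℝ) (N : ℕ) (hNpos : 0 < N)
    (hL : 0 < L) (hμ : 0 < μ) (hc : 0 < c) (hα : 0 < α) (hε : 0 < ε)
    (hσ : 0 < σ) (hC : 0 < C) (hR : 0 < R)
    (η : ℝ) (hη : η = μ * L / (μ + L))
    (hαε : α * ε ≤ 2 / (μ + L)) (hcε : c * ε ≤ 2)
    (A B : ℕ → ℝ) (hA0 : ∀ k, 0 ≤ A k) (hB0 : ∀ k, 0 ≤ B k)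
    (hAR : ∀ k, A k ≤ R)
    (hrecA : ∀ k, A (k + 1) ≤ (1 - 3 * η * α * ε / 2) * A k
      + L * α * ε * (1 / 4 + L / (2 * η)) * B k + N * ε ^ 2 * σ ^ 2)
    (hrecB : ∀ k, B (k + 1) ≤ (1 - c * ε / 2) * B k
      + 3 * L ^ 2 * α ^ 2 * ε / c * (A k + C ^ 2) + 4 * N * ε ^ 2 * σ ^ 2) :
    ∀ k, 1 ≤ k →
      B k ≤ (1 - c * ε / 2) ^ k * B 0
          + 2 / c * (3 * L ^ 2 * α ^ 2 / c * (R + C ^ 2) + 4 * N * ε * σ ^ 2) ∧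
      A k ≤ (1 - 3 * η * α * ε / 2) ^ k * A 0
          + k * (L * α * ε * (1 / 4 + L / (2 * η))) *
            max (1 - 3 * η * α * ε / 2) (1 - c * ε / 2) ^ (k - 1) * B 0
          + 4 * L / (3 * η * c) * (1 / 4 + L / (2 * η)) *
            (3 * L ^ 2 * α ^ 2 / c * (R + C ^ 2) + 4 * N * ε * σ ^ 2)
          + 2 * N * ε * σ ^ 2 / (3 * η * α) := by
  have hμL : 0 < μ + L := by linarith
  have hηpos : 0 < η := by rw [hη]; positivity
  have hηαε : η * α * ε ≤ 1 / 2 := by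
    have h1 : η * (α * ε) ≤ η * (2 / (μ + L)) :=
      mul_le_mul_of_nonneg_left hαε hηpos.le
    have h2 : η * (2 / (μ + L)) ≤ 1 / 2 := by
      rw [hη, div_mul_div_comm, div_le_div_iff₀ (by positivity) (by norm_num)]
      nlinarith [sq_nonneg (μ - L)]
    calc η * α * ε = η * (α * ε) := by ring
      _ ≤ 1 / 2 := h1.trans h2
  have hη2 : 0 < 1 / 4 + L / (2 * η) := by
    have : 0 < L / (2 * η) := div_pos hL (by linarith)
    linarith
  have hNc : (0:ℝ) < (N:ℝ) := by exact_mod_cast hNpos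
  set ρA := 1 - 3 * η * α * ε / 2 with hρAd
  set ρB := 1 - c * ε / 2 with hρBd
  set β := L * α * ε * (1 / 4 + L / (2 * η)) with hβd
  set Q := 3 * L ^ 2 * α ^ 2 / c * (R + C ^ 2) + 4 * (N:ℝ) * ε * σ ^ 2 with hQd
  set S := 2 / c * Q with hSd
  set T3 := 4 * L / (3 * η * c) * (1 / 4 + L / (2 * η)) * Q with hT3d
  set T4 := 2 * (N:ℝ) * ε * σ ^ 2 / (3 * η * α) with hT4d
  set m := max ρA ρB with hmd
  clear_value ρA ρB β Q S T3 T4 m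
  -- positivity facts
  have hρA0 : 0 ≤ ρA := by rw [hρAd]; linarith
  have hρB0 : 0 ≤ ρB := by
    rw [hρBd]
    linarith
  have hβ0 : 0 ≤ β := by
    rw [hβd]
    exact mul_nonneg (by positivity) hη2.le
  have hRC : (0:ℝ) ≤ R + C ^ 2 := add_nonneg hR.le (sq_nonneg C)
  have hQ0 : 0 ≤ Q := by
    rw [hQd]
    have h1 : 0 ≤ 3 * L ^ 2 * α ^ 2 / c := div_nonneg (by positivity) hc.le
    have h2 : (0:ℝ) ≤ 4 * (N:ℝ) * ε * σ ^ 2 :=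
      mul_nonneg (mul_nonneg (mul_nonneg (by norm_num) hNc.le) hε.le) (sq_nonneg σ)
    linarith [mul_nonneg h1 hRC]
  have hS0 : 0 ≤ S := by
    rw [hSd]
    exact mul_nonneg (div_nonneg (by norm_num) hc.le) hQ0
  have hT30 : 0 ≤ T3 := by
    rw [hT3d]
    exact mul_nonneg (mul_nonneg (div_nonneg (by positivity)
      (mul_nonneg (mul_nonneg (by norm_num) hηpos.le) hc.le)) hη2.le) hQ0
  have hT40 : 0 ≤ T4 := by
    rw [hT4d]
    exact div_nonneg
      (mul_nonneg (mul_nonneg (mul_nonneg (by norm_num) hNc.le) hε.le) (sq_nonneg σ))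
      (mul_nonneg (mul_nonneg (by norm_num) hηpos.le) hα.le)
  have hρAm : ρA ≤ m := by rw [hmd]; exact le_max_left _ _
  have hρBm : ρB ≤ m := by rw [hmd]; exact le_max_right _ _
  have hm0 : 0 ≤ m := le_trans hρA0 hρAm
  -- key identities
  have idB : ρB * S + (3 * L ^ 2 * α ^ 2 * ε / c * (R + C ^ 2) + 4 * (N:ℝ) * ε ^ 2 * σ ^ 2) = S := by
    rw [hρBd, hSd, hQd]
    field_simp
    ring
  have idT3 : 3 * η * α * ε / 2 * T3 = β * S := by
    rw [hT3d, hβd, hSd]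
    field_simp
    ring
  have idT4 : 3 * η * α * ε / 2 * T4 = (N:ℝ) * ε ^ 2 * σ ^ 2 := by
    rw [hT4d]
    field_simp
  have idA : ρA * (T3 + T4) + β * S + (N:ℝ) * ε ^ 2 * σ ^ 2 = T3 + T4 := by
    rw [hρAd]
    linear_combination (-1 : ℝ) * idT3 - idT4
  have hDAleT4 : (N:ℝ) * ε ^ 2 * σ ^ 2 ≤ T4 := by
    linarith [mul_nonneg (show (0:ℝ) ≤ 1 - 3 * η * α * ε / 2 by linarith) hT40, idT4]
  -- claim for B
  have claimB : ∀ k, B k ≤ ρB ^ k * B 0 + S := by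
    intro k
    induction k with
    | zero => simp; linarith [hS0]
    | succ k ih =>
      have h1 := hrecB k
      have h2 : 3 * L ^ 2 * α ^ 2 * ε / c * (A k + C ^ 2)
          ≤ 3 * L ^ 2 * α ^ 2 * ε / c * (R + C ^ 2) := by
        refine mul_le_mul_of_nonneg_left ?_ (div_nonneg (by positivity) hc.le)
        linarith [hAR k]
      have h4 : ρB * B k ≤ ρB * (ρB ^ k * B 0 + S) := mul_le_mul_of_nonneg_left ih hρB0
      have h5 : ρB * (ρB ^ k * B 0 + S) = ρB ^ (k + 1) * B 0 + ρB * S := by ring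
      linarith [idB]
  have claimBm : ∀ k, B k ≤ m ^ k * B 0 + S := by
    intro k
    have h1 : ρB ^ k * B 0 ≤ m ^ k * B 0 :=
      mul_le_mul_of_nonneg_right (pow_le_pow_left₀ hρB0 hρBm k) (hB0 0)
    linarith [claimB k]
  -- claim for A
  have claimA : ∀ k, 1 ≤ k → A k ≤ ρA ^ k * A 0 + (k : ℝ) * β * m ^ (k - 1) * B 0 + T3 + T4 := by
    intro k hk
    induction k, hk using Nat.le_induction with
    | base =>
      have h1 := hrecA 0
      simp only [pow_one, Nat.cast_one, one_mul, Nat.sub_self, pow_zero, mul_one]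
      linarith [hDAleT4, hT30]
    | succ k hk ih =>
      obtain ⟨j, rfl⟩ : ∃ j, k = j + 1 := ⟨k - 1, (Nat.succ_pred_eq_of_pos hk).symm⟩
      simp only [Nat.add_sub_cancel] at ih ⊢
      push_cast at ih ⊢
      have h1 := hrecA (j + 1)
      have h2 : ρA * A (j + 1) ≤ ρA * (ρA ^ (j + 1) * A 0 + ((j:ℝ) + 1) * β * m ^ j * B 0 + T3 + T4) :=
        mul_le_mul_of_nonneg_left ih hρA0
      have h3 : β * B (j + 1) ≤ β * (m ^ (j + 1) * B 0 + S) :=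
        mul_le_mul_of_nonneg_left (claimBm (j + 1)) hβ0
      have h4 : ρA * m ^ j ≤ m ^ (j + 1) := by
        calc ρA * m ^ j ≤ m * m ^ j :=
              mul_le_mul_of_nonneg_right hρAm (pow_nonneg hm0 j)
          _ = m ^ (j + 1) := by rw [pow_succ]; ring
      have h5 : ((j:ℝ) + 1) * β * (ρA * m ^ j) * B 0 ≤ ((j:ℝ) + 1) * β * m ^ (j + 1) * B 0 := by
        refine mul_le_mul_of_nonneg_right ?_ (hB0 0)
        refine mul_le_mul_of_nonneg_left h4 ?_
        have : (0:ℝ) ≤ (j:ℝ) + 1 := by positivity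
        exact mul_nonneg this hβ0
      have h6 : 0 ≤ β * m ^ (j + 1) * B 0 :=
        mul_nonneg (mul_nonneg hβ0 (pow_nonneg hm0 _)) (hB0 0)
      have hp1 : ρA ^ (j + 1 + 1) = ρA * ρA ^ (j + 1) := by rw [pow_succ]; ring
      have expand : ρA * (ρA ^ (j + 1) * A 0 + ((j:ℝ) + 1) * β * m ^ j * B 0 + T3 + T4)
            + β * (m ^ (j + 1) * B 0 + S) + (N:ℝ) * ε ^ 2 * σ ^ 2
          = ρA * ρA ^ (j + 1) * A 0 + ((j:ℝ) + 1) * β * (ρA * m ^ j) * B 0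
            + β * m ^ (j + 1) * B 0
            + (ρA * (T3 + T4) + β * S + (N:ℝ) * ε ^ 2 * σ ^ 2) := by ring
      have hsplit : ((j:ℝ) + 1 + 1) * β * m ^ (j + 1) * B 0
          = ((j:ℝ) + 1) * β * m ^ (j + 1) * B 0 + β * m ^ (j + 1) * B 0 := by ring
      rw [hp1]
      linarith [h1, h2, h3, h5, h6, idA, expand, hsplit]
  intro k hk
  exact ⟨claimB k, claimA k hk⟩
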